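/- For any odd positive integer n and any integer λ, n divides ∑_{d | n} φ(n/d)(λ−1)^d − n(λ−1). -/
import Mathlib

open Finset

private lemma fermat_lift12 {p : ℕ} (hp : p.Prime) (x : ℤ) (j : ℕ) :
    (p : ℤ) ^ (j + 1) ∣ x ^ p ^ (j + 1) - x ^ p ^ j := by
  have h1 : (p : ℤ) ∣ x ^ p - x := by
    haveI := Fact.mk hp
    have := ZMod.pow_card (x : ZMod p)
    rw [← ZMod.intCast_zmod_eq_zero_iff_dvd]
    push_cast
    rw [this]; ring
  have h2 := dvd_sub_pow_of_dvd_sub (R := ℤ) h1 j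
  rwa [← pow_mul, ← pow_succ'] at h2

private lemma T_dvd12 {p : ℕ} (hp : p.Prime) (x : ℤ) (k : ℕ) :
    (p : ℤ) ^ k ∣ ∑ j ∈ range (k + 1), (Nat.totient (p ^ (k - j)) : ℤ) * x ^ p ^ j := by
  induction k with
  | zero => simp
  | succ k ih =>
    have hterm : ∀ j < k, (Nat.totient (p ^ (k + 1 - j)) : ℤ)
        = p * Nat.totient (p ^ (k - j)) := by
      intro j hj
      have h1 : 0 < k - j := by omega
      have h2 : 0 < k + 1 - j := by omega
      rw [Nat.totient_prime_pow hp h2, Nat.totient_prime_pow hp h1]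
      rw [show k + 1 - j - 1 = (k - j - 1) + 1 by omega, pow_succ]
      push_cast
      ring
    have e1 : ∑ j ∈ range (k + 1 + 1), (Nat.totient (p ^ (k + 1 - j)) : ℤ) * x ^ p ^ j
        = (∑ j ∈ range k, ((p : ℤ) * Nat.totient (p ^ (k - j))) * x ^ p ^ j)
          + ((p : ℤ) - 1) * x ^ p ^ k + x ^ p ^ (k + 1) := by
      rw [sum_range_succ, sum_range_succ]
      congr 2
      · exact sum_congr rfl fun j hj => by rw [hterm j (mem_range.mp hj)]
      · rw [show k + 1 - k = 1 by omega, pow_one, Nat.totient_prime hp]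
        push_cast [hp.one_le]
        ring
      · rw [show k + 1 - (k + 1) = 0 by omega]
        simp
    have e2 : (p : ℤ) * ∑ j ∈ range (k + 1), (Nat.totient (p ^ (k - j)) : ℤ) * x ^ p ^ j
        = (∑ j ∈ range k, ((p : ℤ) * Nat.totient (p ^ (k - j))) * x ^ p ^ j)
          + (p : ℤ) * x ^ p ^ k := by
      rw [sum_range_succ, mul_add, mul_sum]
      simp [mul_assoc]
    have key : ∑ j ∈ range (k + 1 + 1), (Nat.totient (p ^ (k + 1 - j)) : ℤ) * x ^ p ^ j
        = (p : ℤ) * (∑ j ∈ range (k + 1), (Nat.totient (p ^ (k - j)) : ℤ) * x ^ p ^ j)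
          + (x ^ p ^ (k + 1) - x ^ p ^ k) := by
      rw [e1, e2]; ring
    rw [key]
    exact dvd_add (by rw [pow_succ']; exact mul_dvd_mul_left _ ih) (fermat_lift12 hp x k)

private lemma divisors_mul_sum12 {a b : ℕ} (hab : Nat.Coprime a b) (f : ℕ → ℤ) :
    ∑ d ∈ (a * b).divisors, f d = ∑ u ∈ a.divisors, ∑ v ∈ b.divisors, f (u * v) := by
  rw [← Finset.sum_product']
  refine Finset.sum_nbij' (fun d => (Nat.gcd d a, Nat.gcd d b)) (fun p => p.1 * p.2) ?_ ?_ ?_ ?_ ?_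
  · intro d hd
    rw [Nat.mem_divisors] at hd
    have hne : a * b ≠ 0 := hd.2
    simp only [Finset.mem_product, Nat.mem_divisors]
    exact ⟨⟨Nat.gcd_dvd_right d a, fun h => hne (by simp [h])⟩,
           ⟨Nat.gcd_dvd_right d b, fun h => hne (by simp [h])⟩⟩
  · intro q hq
    simp only [Finset.mem_product, Nat.mem_divisors] at hq
    exact Nat.mem_divisors.mpr ⟨mul_dvd_mul hq.1.1 hq.2.1, mul_ne_zero hq.1.2 hq.2.2⟩
  · intro d hd
    rw [Nat.mem_divisors] at hd
    exact (Nat.gcd_mul_gcd_eq_iff_dvd_mul_of_coprime hab).mpr hd.1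
  · intro q hq
    simp only [Finset.mem_product, Nat.mem_divisors] at hq
    have h1 : Nat.Coprime q.2 a := (hab.coprime_dvd_right hq.2.1).symm
    have h2 : Nat.Coprime q.1 b := hab.coprime_dvd_left hq.1.1
    have e1 : Nat.gcd (q.1 * q.2) a = q.1 := by
      rw [Nat.Coprime.gcd_mul_right_cancel _ h1, Nat.gcd_eq_left hq.1.1]
    have e2 : Nat.gcd (q.1 * q.2) b = q.2 := by
      rw [mul_comm, Nat.Coprime.gcd_mul_right_cancel _ h2, Nat.gcd_eq_left hq.2.1]
    simp [e1, e2]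
  · intro d hd
    rw [Nat.mem_divisors] at hd
    rw [(Nat.gcd_mul_gcd_eq_iff_dvd_mul_of_coprime hab).mpr hd.1]

private lemma necklace_dvd12 : ∀ n : ℕ, ∀ x : ℤ,
    (n : ℤ) ∣ ∑ d ∈ n.divisors, (Nat.totient (n / d) : ℤ) * x ^ d := by
  refine Nat.recOnPosPrimePosCoprime ?_ ?_ ?_ ?_
  · -- prime powers
    intro p k hp hk x
    have hp' := hp
    rw [Nat.sum_divisors_prime_pow hp']
    have h : ∀ j ∈ range (k + 1),
        (Nat.totient (p ^ k / p ^ j) : ℤ) * x ^ p ^ j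
        = (Nat.totient (p ^ (k - j)) : ℤ) * x ^ p ^ j := by
      intro j hj
      rw [Nat.pow_div (by simpa using Nat.lt_succ_iff.mp (mem_range.mp hj)) hp'.pos]
    rw [sum_congr rfl h]
    have := T_dvd12 hp' x k
    rwa [← Nat.cast_pow] at this
  · intro x; simp
  · intro x; simp
  · -- coprime products
    intro a b ha hb hab iha ihb x
    have hD : ∑ d ∈ (a * b).divisors, (Nat.totient (a * b / d) : ℤ) * x ^ d
        = ∑ u ∈ a.divisors, ∑ v ∈ b.divisors,
            (Nat.totient (a / u) : ℤ) * (Nat.totient (b / v) : ℤ) * x ^ (u * v) := by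
      rw [divisors_mul_sum12 hab]
      refine sum_congr rfl fun u hu => sum_congr rfl fun v hv => ?_
      rw [Nat.mem_divisors] at hu hv
      rw [← Nat.div_mul_div_comm hu.1 hv.1,
        Nat.totient_mul
          ((hab.coprime_dvd_left (Nat.div_dvd_of_dvd hu.1)).coprime_dvd_right
            (Nat.div_dvd_of_dvd hv.1))]
      push_cast; ring
    have hb_dvd : (b : ℤ) ∣ ∑ d ∈ (a * b).divisors, (Nat.totient (a * b / d) : ℤ) * x ^ d := by
      rw [hD]
      refine dvd_sum fun u _ => ?_
      have h : ∑ v ∈ b.divisors, (Nat.totient (a / u) : ℤ) * (Nat.totient (b / v) : ℤ) * x ^ (u * v)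
          = (Nat.totient (a / u) : ℤ) * ∑ v ∈ b.divisors, (Nat.totient (b / v) : ℤ) * (x ^ u) ^ v := by
        rw [mul_sum]
        exact sum_congr rfl fun v _ => by rw [← pow_mul]; ring
      rw [h]
      exact (ihb (x ^ u)).mul_left _
    have ha_dvd : (a : ℤ) ∣ ∑ d ∈ (a * b).divisors, (Nat.totient (a * b / d) : ℤ) * x ^ d := by
      rw [hD, sum_comm]
      refine dvd_sum fun v _ => ?_
      have h : ∑ u ∈ a.divisors, (Nat.totient (a / u) : ℤ) * (Nat.totient (b / v) : ℤ) * x ^ (u * v)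
          = (Nat.totient (b / v) : ℤ) * ∑ u ∈ a.divisors, (Nat.totient (a / u) : ℤ) * (x ^ v) ^ u := by
        rw [mul_sum]
        exact sum_congr rfl fun u _ => by rw [← pow_mul, mul_comm u v]; ring
      rw [h]
      exact (iha (x ^ v)).mul_left _
    push_cast
    exact (Nat.isCoprime_iff_coprime.mpr hab).mul_dvd ha_dvd hb_dvd

/-- For odd positive `n` and any integer `l`,
`n` divides `∑_{d ∣ n} φ(n/d)(l-1)^d - n(l-1)`. -/
theorem orbital_stmt12 (n : ℕ) (hn : 0 < n) (hodd : Odd n) (l : ℤ) :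
    (n : ℤ) ∣ (∑ d ∈ n.divisors, (Nat.totient (n / d) : ℤ) * (l - 1) ^ d) - n * (l - 1) := by
  exact dvd_sub (necklace_dvd12 n (l - 1)) (Dvd.intro _ rfl)
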